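/- Let V and V' be finite-dimensional vector spaces over ℚ, both of dimension n, let B : V × V' → ℚ be a nondegenerate bilinear pairing, let λ be a nonzero rational number, and let f : V → V and g : V' → V' be linear endomorphisms such that B(f(x), g(y)) = λ·B(x, y) for all x ∈ V and y ∈ V'. Then for every nonzero rational number t, det(id_{V'} − t·g) · det f = (−1)^n · λ^n · t^n · det(id_V − (λt)⁻¹·f). -/

import Mathlib

open Matrix


/-- Lemma (Wójcik / Lemma 2.2 (2)): for a nondegenerate pairing `B : V × V' → ℚ` of
`n`-dimensional spaces and endomorphisms `f`, `g` with `B (f x) (g y) = λ • B x y`,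
one has `det(id - t•g) * det f = (-1)^n λ^n t^n det(id - (λt)⁻¹•f)` for nonzero `t`. -/
theorem stmt_1 {V V' : Type*} [AddCommGroup V] [Module ℚ V] [AddCommGroup V'] [Module ℚ V']
    [FiniteDimensional ℚ V] [FiniteDimensional ℚ V'] (n : ℕ)
    (hV : Module.finrank ℚ V = n) (hV' : Module.finrank ℚ V' = n)
    (B : V →ₗ[ℚ] V' →ₗ[ℚ] ℚ)
    (hB1 : ∀ x : V, (∀ y : V', B x y = 0) → x = 0)
    (hB2 : ∀ y : V', (∀ x : V, B x y = 0) → y = 0)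
    (l : ℚ) (hl : l ≠ 0)
    (f : V →ₗ[ℚ] V) (g : V' →ₗ[ℚ] V')
    (hfg : ∀ (x : V) (y : V'), B (f x) (g y) = l * B x y)
    (t : ℚ) (ht : t ≠ 0) :
    LinearMap.det (LinearMap.id - t • g) * LinearMap.det f =
      (-1 : ℚ) ^ n * l ^ n * t ^ n * LinearMap.det (LinearMap.id - (l * t)⁻¹ • f) := by
  classical
  let bV : Module.Basis (Fin n) ℚ V := Module.finBasisOfFinrankEq ℚ V hV
  let bV' : Module.Basis (Fin n) ℚ V' := Module.finBasisOfFinrankEq ℚ V' hV'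
  set F : Matrix (Fin n) (Fin n) ℚ := LinearMap.toMatrix bV bV f with hF
  set G : Matrix (Fin n) (Fin n) ℚ := LinearMap.toMatrix bV' bV' g with hG
  set M : Matrix (Fin n) (Fin n) ℚ := LinearMap.toMatrix₂ bV bV' B with hM
  -- key matrix relation
  have hcompl : B.compl₁₂ f g = l • B := by
    ext x y
    simp [LinearMap.compl₁₂_apply, hfg, smul_eq_mul]
  have h1 : Fᵀ * M * G = l • M := by
    have := LinearMap.toMatrix₂_compl₁₂ bV bV' bV bV' B f g
    rw [hcompl] at this
    rw [← this, hM]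
    simp
  -- det M ≠ 0
  have hdetM : M.det ≠ 0 := by
    intro hdet
    obtain ⟨c, hc, hcM⟩ := Matrix.exists_vecMul_eq_zero_iff.mpr hdet
    set x : V := bV.equivFun.symm c with hx
    have hxB : B x = 0 := by
      apply bV'.ext
      intro j
      have : B x (bV' j) = ∑ i, c i * M i j := by
        simp [hx, Module.Basis.equivFun_symm_apply, hM, LinearMap.toMatrix₂_apply,
          Finset.sum_apply, map_sum]
      rw [this]
      have := congrFun hcM j
      simpa [Matrix.vecMul, dotProduct] using this
    have hx0 : x = 0 := hB1 x (fun y => by rw [hxB]; rfl)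
    apply hc
    have h0 : bV.equivFun.symm c = bV.equivFun.symm 0 := by rw [map_zero]; exact hx0
    simpa using bV.equivFun.symm.injective h0
  -- main matrix identity
  have h2 : Fᵀ * M * (1 - t • G) = (Fᵀ - (l * t) • 1) * M := by
    rw [Matrix.mul_sub, Matrix.mul_smul, h1, Matrix.sub_mul, Matrix.smul_mul,
      Matrix.one_mul, Matrix.mul_one, smul_smul, mul_comm t l]
  have h3 : F.det * M.det * (1 - t • G).det = (Fᵀ - (l * t) • 1).det * M.det := by
    have h := congrArg Matrix.det h2
    rwa [Matrix.det_mul, Matrix.det_mul, Matrix.det_mul, Matrix.det_transpose] at h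
  have hlt : l * t ≠ 0 := mul_ne_zero hl ht
  have h4 : (Fᵀ - (l * t) • 1) = ((-(l * t)) • (1 - (l * t)⁻¹ • F))ᵀ := by
    rw [Matrix.transpose_smul, Matrix.transpose_sub, Matrix.transpose_one,
      Matrix.transpose_smul, smul_sub, smul_smul]
    rw [neg_mul, mul_inv_cancel₀ hlt]
    simp [sub_eq_add_neg, add_comm]
  have h5 : (Fᵀ - (l * t) • 1).det = (-(l * t)) ^ n * (1 - (l * t)⁻¹ • F).det := by
    rw [h4, Matrix.det_transpose, Matrix.det_smul, Fintype.card_fin]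
  -- translate linear map dets to matrix dets
  have hdg : LinearMap.det (LinearMap.id - t • g) = (1 - t • G).det := by
    rw [← LinearMap.det_toMatrix bV']
    congr 1
    rw [map_sub, _root_.map_smul, LinearMap.toMatrix_id]
  have hdf : LinearMap.det f = F.det := (LinearMap.det_toMatrix bV f).symm
  have hdf' : LinearMap.det (LinearMap.id - (l * t)⁻¹ • f) = (1 - (l * t)⁻¹ • F).det := by
    rw [← LinearMap.det_toMatrix bV]
    congr 1
    rw [map_sub, _root_.map_smul, LinearMap.toMatrix_id]
  rw [hdg, hdf, hdf']
  have h6 : F.det * (1 - t • G).det = (-(l * t)) ^ n * (1 - (l * t)⁻¹ • F).det := by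
    have := mul_right_cancel₀ hdetM (by linear_combination h3 : F.det * (1 - t • G).det * M.det = (Fᵀ - (l * t) • 1).det * M.det)
    rw [this, h5]
  have h7 : (-(l * t)) ^ n = (-1 : ℚ) ^ n * l ^ n * t ^ n := by
    rw [neg_eq_neg_one_mul, mul_pow, mul_pow]; ring
  rw [mul_comm, h6, h7]
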